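/- Matrix completion: Let k, ℓ be positive integers and suppose [[U_11, U_31^T],[U_31, U_33]] ∈ 𝕊^{k+1} and [[U_22, U_32^T],[U_32, U_33]] ∈ 𝕊^{ℓ+1} are positive semidefinite, where U_33 is a 1×1 block. Then there exists U_21 ∈ ℝ^{ℓ×k} such that the block matrix [[U_11, U_21^T, U_31^T],[U_21, U_22, U_32^T],[U_31, U_32, U_33]] is positive semidefinite. -/

import Mathlib

open Matrix

lemma quad_aux {n : ℕ} (M : Matrix (Fin n) (Fin n) ℝ) (b : Matrix Unit (Fin n) ℝ) (u : ℝ)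
    (h : (Matrix.fromBlocks M bᵀ b (Matrix.of fun (_ _ : Unit) => u)).PosSemidef)
    (x : Fin n → ℝ) (s : ℝ) :
    0 ≤ x ⬝ᵥ M.mulVec x + 2*s*(b () ⬝ᵥ x) + s^2*u := by
  have H := h.dotProduct_mulVec_nonneg (Sum.elim x (fun _ => s))
  simp [dotProduct_block, fromBlocks_mulVec, mulVec, dotProduct, transpose,
    mul_add, Finset.sum_add_distrib, Finset.mul_sum] at H ⊢
  ring_nf at H ⊢
  have e1 : ∑ i, s * b () i * x i * 2
      = (∑ i, s * b PUnit.unit i * x i) + ∑ i, s * x i * b PUnit.unit i := by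
    rw [← Finset.sum_add_distrib]
    exact Finset.sum_congr rfl fun i _ => by ring
  rw [e1]; linarith

lemma quad_big {k l : ℕ} (U11 : Matrix (Fin k) (Fin k) ℝ) (U22 : Matrix (Fin l) (Fin l) ℝ)
    (U21 : Matrix (Fin l) (Fin k) ℝ)
    (U31 : Matrix Unit (Fin k) ℝ) (U32 : Matrix Unit (Fin l) ℝ) (u : ℝ)
    (z : (Fin k ⊕ Fin l) ⊕ Unit → ℝ) :
    star z ⬝ᵥ (Matrix.fromBlocks
        (Matrix.fromBlocks U11 U21ᵀ U21 U22)
        (Matrix.of fun (i : Fin k ⊕ Fin l) (u : Unit) =>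
          Sum.elim (fun a => U31 u a) (fun b => U32 u b) i)
        (Matrix.of fun (u : Unit) (j : Fin k ⊕ Fin l) =>
          Sum.elim (fun a => U31 u a) (fun b => U32 u b) j)
        (Matrix.of fun (_ _ : Unit) => u)).mulVec z
    = (fun i => z (.inl (.inl i))) ⬝ᵥ U11.mulVec (fun i => z (.inl (.inl i)))
      + (fun i => z (.inl (.inr i))) ⬝ᵥ U22.mulVec (fun i => z (.inl (.inr i)))
      + 2 * ((fun i => z (.inl (.inr i))) ⬝ᵥ U21.mulVec (fun i => z (.inl (.inl i))))
      + 2 * z (.inr ()) * (U31 () ⬝ᵥ (fun i => z (.inl (.inl i))))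
      + 2 * z (.inr ()) * (U32 () ⬝ᵥ (fun i => z (.inl (.inr i))))
      + (z (.inr ()))^2 * u := by
  simp [dotProduct_block, fromBlocks_mulVec, mulVec, dotProduct, transpose,
    mul_add, add_mul, Finset.sum_add_distrib, Finset.mul_sum, Finset.sum_mul]
  ring_nf
  have e21 : ∑ x : Fin k, ∑ x_1 : Fin l,
        z (Sum.inl (Sum.inl x)) * U21 x_1 x * z (Sum.inl (Sum.inr x_1))
      = ∑ x : Fin l, ∑ x_1 : Fin k,
        z (Sum.inl (Sum.inr x)) * U21 x x_1 * z (Sum.inl (Sum.inl x_1)) := by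
    rw [Finset.sum_comm]
    exact Finset.sum_congr rfl fun i _ => Finset.sum_congr rfl fun j _ => by ring
  have e2 : ∑ x : Fin l, ∑ x_1 : Fin k,
        2 * z (Sum.inl (Sum.inr x)) * U21 x x_1 * z (Sum.inl (Sum.inl x_1))
      = (∑ x : Fin l, ∑ x_1 : Fin k,
          z (Sum.inl (Sum.inr x)) * U21 x x_1 * z (Sum.inl (Sum.inl x_1)))
        + ∑ x : Fin l, ∑ x_1 : Fin k,
          z (Sum.inl (Sum.inr x)) * U21 x x_1 * z (Sum.inl (Sum.inl x_1)) := by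
    rw [← Finset.sum_add_distrib]
    refine Finset.sum_congr rfl fun i _ => ?_
    rw [← Finset.sum_add_distrib]
    exact Finset.sum_congr rfl fun j _ => by ring
  have e3 : ∑ x : Fin k, z (Sum.inr PUnit.unit) * 2 * U31 () x * z (Sum.inl (Sum.inl x))
      = (∑ x : Fin k, z (Sum.inr PUnit.unit) * U31 PUnit.unit x * z (Sum.inl (Sum.inl x)))
        + ∑ x : Fin k, z (Sum.inl (Sum.inl x)) * U31 PUnit.unit x * z (Sum.inr PUnit.unit) := by
    rw [← Finset.sum_add_distrib]
    exact Finset.sum_congr rfl fun i _ => by ring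
  have e4 : ∑ x : Fin l, z (Sum.inr PUnit.unit) * 2 * U32 () x * z (Sum.inl (Sum.inr x))
      = (∑ x : Fin l, z (Sum.inr PUnit.unit) * U32 PUnit.unit x * z (Sum.inl (Sum.inr x)))
        + ∑ x : Fin l, z (Sum.inl (Sum.inr x)) * U32 PUnit.unit x * z (Sum.inr PUnit.unit) := by
    rw [← Finset.sum_add_distrib]
    exact Finset.sum_congr rfl fun i _ => by ring
  have e5 : ∑ x : Fin k, z (Sum.inr PUnit.unit) * U31 () x * z (Sum.inl (Sum.inl x)) * 2
      = (∑ x : Fin k, z (Sum.inr PUnit.unit) * U31 PUnit.unit x * z (Sum.inl (Sum.inl x)))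
        + ∑ x : Fin k, z (Sum.inr PUnit.unit) * z (Sum.inl (Sum.inl x)) * U31 PUnit.unit x := by
    rw [← Finset.sum_add_distrib]
    exact Finset.sum_congr rfl fun i _ => by ring
  have e6 : ∑ x : Fin l, z (Sum.inr PUnit.unit) * U32 () x * z (Sum.inl (Sum.inr x)) * 2
      = (∑ x : Fin l, z (Sum.inr PUnit.unit) * U32 PUnit.unit x * z (Sum.inl (Sum.inr x)))
        + ∑ x : Fin l, z (Sum.inr PUnit.unit) * z (Sum.inl (Sum.inr x)) * U32 PUnit.unit x := by
    rw [← Finset.sum_add_distrib]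
    exact Finset.sum_congr rfl fun i _ => by ring
  have e7 : ∑ x : Fin l, ∑ x_1 : Fin k,
        z (Sum.inl (Sum.inr x)) * U21 x x_1 * z (Sum.inl (Sum.inl x_1)) * 2
      = (∑ x : Fin l, ∑ x_1 : Fin k,
          z (Sum.inl (Sum.inr x)) * U21 x x_1 * z (Sum.inl (Sum.inl x_1)))
        + ∑ x : Fin l, ∑ x_1 : Fin k,
          z (Sum.inl (Sum.inr x)) * U21 x x_1 * z (Sum.inl (Sum.inl x_1)) := by
    rw [← Finset.sum_add_distrib]
    refine Finset.sum_congr rfl fun i _ => ?_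
    rw [← Finset.sum_add_distrib]
    exact Finset.sum_congr rfl fun j _ => by ring
  linarith [e21, e2, e3, e4, e5, e6, e7]

lemma herm_big {k l : ℕ} (U11 : Matrix (Fin k) (Fin k) ℝ) (U22 : Matrix (Fin l) (Fin l) ℝ)
    (U21 : Matrix (Fin l) (Fin k) ℝ)
    (U31 : Matrix Unit (Fin k) ℝ) (U32 : Matrix Unit (Fin l) ℝ) (u : ℝ)
    (hU11 : U11.IsHermitian) (hU22 : U22.IsHermitian) :
    (Matrix.fromBlocks
        (Matrix.fromBlocks U11 U21ᵀ U21 U22)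
        (Matrix.of fun (i : Fin k ⊕ Fin l) (u : Unit) =>
          Sum.elim (fun a => U31 u a) (fun b => U32 u b) i)
        (Matrix.of fun (u : Unit) (j : Fin k ⊕ Fin l) =>
          Sum.elim (fun a => U31 u a) (fun b => U32 u b) j)
        (Matrix.of fun (_ _ : Unit) => u)).IsHermitian := by
  apply Matrix.IsHermitian.fromBlocks
  · exact Matrix.IsHermitian.fromBlocks hU11 (by ext i j; simp) hU22
  · ext i j; cases j <;> simp [conjTranspose_apply]
  · ext i j; simp [Matrix.IsHermitian, conjTranspose_apply]

/-- Matrix completion: if `[[U₁₁, U₃₁ᵀ],[U₃₁, U₃₃]] ⪰ 0` and `[[U₂₂, U₃₂ᵀ],[U₃₂, U₃₃]] ⪰ 0`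
(with `U₃₃` a scalar), then there exists `U₂₁` such that the full block matrix
`[[U₁₁, U₂₁ᵀ, U₃₁ᵀ],[U₂₁, U₂₂, U₃₂ᵀ],[U₃₁, U₃₂, U₃₃]]` is positive semidefinite. -/
theorem stmt_12 (k l : ℕ) (hk : 0 < k) (hl : 0 < l)
    (U11 : Matrix (Fin k) (Fin k) ℝ) (U22 : Matrix (Fin l) (Fin l) ℝ)
    (U31 : Matrix Unit (Fin k) ℝ) (U32 : Matrix Unit (Fin l) ℝ) (U33 : ℝ)
    (h1 : (Matrix.fromBlocks U11 U31ᵀ U31 (Matrix.of fun (_ _ : Unit) => U33)).PosSemidef)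
    (h2 : (Matrix.fromBlocks U22 U32ᵀ U32 (Matrix.of fun (_ _ : Unit) => U33)).PosSemidef) :
    ∃ U21 : Matrix (Fin l) (Fin k) ℝ,
      (Matrix.fromBlocks
        (Matrix.fromBlocks U11 U21ᵀ U21 U22)
        (Matrix.of fun (i : Fin k ⊕ Fin l) (u : Unit) =>
          Sum.elim (fun a => U31 u a) (fun b => U32 u b) i)
        (Matrix.of fun (u : Unit) (j : Fin k ⊕ Fin l) =>
          Sum.elim (fun a => U31 u a) (fun b => U32 u b) j)
        (Matrix.of fun (_ _ : Unit) => U33)).PosSemidef := by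
  obtain ⟨hU11, -, -, -⟩ := Matrix.isHermitian_fromBlocks_iff.mp h1.1
  obtain ⟨hU22, -, -, -⟩ := Matrix.isHermitian_fromBlocks_iff.mp h2.1
  have hu : 0 ≤ U33 := by simpa using quad_aux U11 U31 U33 h1 0 1
  rcases hu.eq_or_lt with he | hu'
  · -- U33 = 0
    obtain rfl := he.symm
    refine ⟨0, .of_dotProduct_mulVec_nonneg (herm_big U11 U22 0 U31 U32 0 hU11 hU22) fun z => ?_⟩
    rw [quad_big]
    set X : Fin k → ℝ := fun i => z (.inl (.inl i)) with hX
    set Y : Fin l → ℝ := fun i => z (.inl (.inr i)) with hY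
    have hA : 0 ≤ X ⬝ᵥ U11.mulVec X := by simpa using quad_aux U11 U31 0 h1 X 0
    have hC : 0 ≤ Y ⬝ᵥ U22.mulVec Y := by simpa using quad_aux U22 U32 0 h2 Y 0
    have hB : U31 () ⬝ᵥ X = 0 := by
      by_contra hB
      have h0 := quad_aux U11 U31 0 h1 X
        (-(X ⬝ᵥ U11.mulVec X + 1) / (2 * (U31 () ⬝ᵥ X)))
      have : 2 * (-(X ⬝ᵥ U11.mulVec X + 1) / (2 * (U31 () ⬝ᵥ X))) * (U31 () ⬝ᵥ X)
          = -(X ⬝ᵥ U11.mulVec X + 1) := by field_simp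
      rw [this] at h0
      nlinarith [h0]
    have hD : U32 () ⬝ᵥ Y = 0 := by
      by_contra hD
      have h0 := quad_aux U22 U32 0 h2 Y
        (-(Y ⬝ᵥ U22.mulVec Y + 1) / (2 * (U32 () ⬝ᵥ Y)))
      have : 2 * (-(Y ⬝ᵥ U22.mulVec Y + 1) / (2 * (U32 () ⬝ᵥ Y))) * (U32 () ⬝ᵥ Y)
          = -(Y ⬝ᵥ U22.mulVec Y + 1) := by field_simp
      rw [this] at h0
      nlinarith [h0]
    simp only [hB, hD]
    have hz : Y ⬝ᵥ (0 : Matrix (Fin l) (Fin k) ℝ).mulVec X = 0 := by simp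
    rw [hz]
    ring_nf
    linarith
  · -- 0 < U33
    set U21 : Matrix (Fin l) (Fin k) ℝ :=
      Matrix.of fun i j => U32 () i * U31 () j / U33 with hU21
    refine ⟨U21, .of_dotProduct_mulVec_nonneg (herm_big U11 U22 U21 U31 U32 U33 hU11 hU22) fun z => ?_⟩
    rw [quad_big]
    set X : Fin k → ℝ := fun i => z (.inl (.inl i)) with hX
    set Y : Fin l → ℝ := fun i => z (.inl (.inr i)) with hY
    set t : ℝ := z (.inr ()) with ht
    set A := X ⬝ᵥ U11.mulVec X with hA0
    set C := Y ⬝ᵥ U22.mulVec Y with hC0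
    set B := U31 () ⬝ᵥ X with hB0
    set D := U32 () ⬝ᵥ Y with hD0
    have hne : U33 ≠ 0 := hu'.ne'
    have ecross : Y ⬝ᵥ U21.mulVec X = D * B / U33 := by
      rw [hD0, hB0]
      simp only [hU21, mulVec, dotProduct, Matrix.of_apply]
      rw [Finset.sum_mul_sum, Finset.sum_div]
      refine Finset.sum_congr rfl fun i _ => ?_
      rw [Finset.mul_sum, Finset.sum_div]
      exact Finset.sum_congr rfl fun j _ => by ring
    have hA' : B ^ 2 ≤ U33 * A := by
      have h0 := quad_aux U11 U31 U33 h1 X (-(B / U33))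
      rw [← hA0, ← hB0] at h0
      have hw : U33 * (B / U33) = B := mul_div_cancel₀ _ hne
      nlinarith [h0, hu', hw, sq_nonneg (B / U33)]
    have hC' : D ^ 2 ≤ U33 * C := by
      have h0 := quad_aux U22 U32 U33 h2 Y (-(D / U33))
      rw [← hC0, ← hD0] at h0
      have hw : U33 * (D / U33) = D := mul_div_cancel₀ _ hne
      nlinarith [h0, hu', hw, sq_nonneg (D / U33)]
    rw [ecross]
    have hq : U33 * (D * B / U33) = D * B := mul_div_cancel₀ _ hne
    nlinarith [hA', hC', hu', hq, sq_nonneg (B + D + t * U33)]
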